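/- Determinantal Certificate: For f ∈ ℤ_n^{ℤ_n}, one has n = max_{σ ∈ S_n} |{ |σ(f(σ⁻¹(i))) − i| : i ∈ ℤ_n }| if and only if the least common multiple (in the UFD ℚ[x_0,...,x_{n−1}]) of the two polynomials ∏_{0≤i<j<n} (x_j − x_i) and ∏_{0≤i<j<n} ((x_{f(j)} − x_j)² − (x_{f(i)} − x_i)²) does not lie in the ideal J_n generated by the falling factorials (x_k)^↓n, k ∈ ℤ_n. -/

import Mathlib

open Finset MvPolynomial

/-- The maximal number of distinct induced subtractive edge labels
`|σ(f(σ⁻¹(i))) − i|` over all relabelings `σ ∈ S_n`. -/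
noncomputable def gapMax (n : ℕ) (f : Fin n → Fin n) : ℕ :=
  Finset.univ.sup fun σ : Equiv.Perm (Fin n) =>
    (Finset.image
      (fun i : Fin n => |((σ (f (σ.symm i)) : ℕ) : ℤ) - ((i : ℕ) : ℤ)|)
      Finset.univ).card

/-- The ideal `J_n` generated by the falling factorials `(x_k)^↓n`. -/
noncomputable def fallingIdeal (n : ℕ) : Ideal (MvPolynomial (Fin n) ℚ) :=
  Ideal.span (Set.range fun k : Fin n =>
    ∏ i ∈ Finset.range n, (X k - C (i : ℚ)))

/-- The vertex Vandermonde polynomial `∏_{0 ≤ i < j < n} (x_j − x_i)`. -/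
noncomputable def vertexVandermonde (n : ℕ) : MvPolynomial (Fin n) ℚ :=
  ∏ p ∈ Finset.univ.filter (fun p : Fin n × Fin n => p.1 < p.2),
    (X p.2 - X p.1)

/-- The edge Vandermonde polynomial
`∏_{0 ≤ i < j < n} ((x_{f(j)} − x_j)² − (x_{f(i)} − x_i)²)`. -/
noncomputable def edgeVandermonde (n : ℕ) (f : Fin n → Fin n) :
    MvPolynomial (Fin n) ℚ :=
  ∏ p ∈ Finset.univ.filter (fun p : Fin n × Fin n => p.1 < p.2),
    ((X (f p.2) - X p.2) ^ 2 - (X (f p.1) - X p.1) ^ 2)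

/-! ### Auxiliary material -/

/-- The falling-factorial generator in `m` variables with grid size `n`. -/
noncomputable def fallGen (m n : ℕ) (k : Fin m) : MvPolynomial (Fin m) ℚ :=
  ∏ i ∈ Finset.range n, (X k - C (i : ℚ))

lemma eval_fallGen_zero {m n : ℕ} (a : Fin m → Fin n) (k : Fin m) :
    eval (fun j => ((a j : ℕ) : ℚ)) (fallGen m n k) = 0 := by
  rw [fallGen, map_prod]
  apply Finset.prod_eq_zero (Finset.mem_range.2 (a k).2)
  simp

/-- A polynomial vanishing on the whole grid `{0,…,n−1}^m` (with `m ≤ n`)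
belongs to the ideal generated by the falling factorials. -/
lemma grid_vanish_mem (n : ℕ) : ∀ (m : ℕ), m ≤ n → ∀ (p : MvPolynomial (Fin m) ℚ),
    (∀ a : Fin m → Fin n, eval (fun j => ((a j : ℕ) : ℚ)) p = 0) →
    p ∈ Ideal.span (Set.range (fallGen m n)) := by
  intro m
  induction m with
  | zero =>
    intro _ p hp
    obtain ⟨c, rfl⟩ := C_surjective (Fin 0) p
    have := hp (Fin.elim0)
    rw [eval_C] at this
    rw [this, map_zero]
    exact Ideal.zero_mem _
  | succ m ih =>
    intro hmn p hp
    have hn : 0 < n := lt_of_lt_of_le (Nat.succ_pos m) hmn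
    classical
    set e := finSuccEquiv ℚ m with he
    set g : Polynomial (MvPolynomial (Fin m) ℚ) :=
      ∏ i ∈ Finset.range n, (Polynomial.X - Polynomial.C (C (i : ℚ))) with hg
    have hgmonic : g.Monic :=
      Polynomial.monic_prod_of_monic _ _ fun i _ => Polynomial.monic_X_sub_C _
    have hgdeg : g.natDegree = n := by
      rw [hg, Polynomial.natDegree_prod_of_monic _ _ fun i _ => Polynomial.monic_X_sub_C _,
        Finset.sum_congr rfl fun i _ => Polynomial.natDegree_X_sub_C _]
      simp
    set R := (e p) %ₘ g with hRdef
    have hGg : e (fallGen (m+1) n 0) = g := by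
      rw [fallGen, map_prod]
      refine Finset.prod_congr rfl fun i _ => ?_
      rw [map_sub, he, finSuccEquiv_X_zero]
      congr 1
      simp [finSuccEquiv_apply]
    have hpdecomp : p = e.symm R + fallGen (m+1) n 0 * e.symm (e p /ₘ g) := by
      apply e.injective
      rw [map_add, map_mul, e.apply_symm_apply, e.apply_symm_apply, hGg]
      exact (Polynomial.modByMonic_add_div (e p) g).symm
    have hr : ∀ a : Fin (m+1) → Fin n, eval (fun j => ((a j : ℕ) : ℚ)) (e.symm R) = 0 := by
      intro a
      have h0 := hp a
      rw [hpdecomp, map_add, map_mul] at h0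
      have hGz : eval (fun j => ((a j : ℕ) : ℚ)) (fallGen (m+1) n 0) = 0 := by
        rw [fallGen, map_prod]
        apply Finset.prod_eq_zero (Finset.mem_range.2 (a 0).2)
        simp
      rw [hGz, zero_mul, add_zero] at h0
      exact h0
    have hcoeff : ∀ d : ℕ, ∀ b : Fin m → Fin n,
        eval (fun j => ((b j : ℕ) : ℚ)) (R.coeff d) = 0 := by
      intro d b
      set sb : Fin m → ℚ := fun j => ((b j : ℕ) : ℚ) with hsb
      have hRb : Polynomial.map (eval sb) R = 0 := by
        apply Polynomial.eq_zero_of_natDegree_lt_card_of_eval_eq_zero _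
          (f := fun y : Fin n => ((y : ℕ) : ℚ))
          (fun y₁ y₂ h => Fin.ext (Nat.cast_injective h))
        · intro y
          have := hr (Fin.cons y b)
          have hpt : (fun j => (((Fin.cons y b : Fin (m+1) → Fin n) j : ℕ) : ℚ))
              = Fin.cons ((y : ℕ) : ℚ) sb := by
            funext j
            refine Fin.cases ?_ (fun k => ?_) j <;> simp [hsb]
          rw [hpt, eval_eq_eval_mv_eval'] at this
          rw [← this]
          congr 1
          rw [e.apply_symm_apply]
        · rcases eq_or_ne R 0 with h | h
          · simpa [h] using hn
          · calc (Polynomial.map (eval sb) R).natDegree ≤ R.natDegree :=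
                  Polynomial.natDegree_map_le
              _ < g.natDegree := Polynomial.natDegree_lt_natDegree h
                  (Polynomial.degree_modByMonic_lt _ hgmonic)
              _ = n := hgdeg
              _ = Fintype.card (Fin n) := (Fintype.card_fin n).symm
      have := congrArg (fun q => Polynomial.coeff q d) hRb
      simpa [Polynomial.coeff_map] using this
    have hcmem : ∀ d : ℕ, R.coeff d ∈ Ideal.span (Set.range (fallGen m n)) :=
      fun d => ih (Nat.le_of_succ_le hmn) _ (hcoeff d)
    set ψ : MvPolynomial (Fin m) ℚ →+* MvPolynomial (Fin (m+1)) ℚ :=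
      (e.symm : Polynomial (MvPolynomial (Fin m) ℚ) ≃+* _).toRingHom.comp Polynomial.C with hψ
    have hψgen : ∀ k : Fin m, ψ (fallGen m n k) = fallGen (m+1) n k.succ := by
      intro k
      rw [fallGen, fallGen, map_prod]
      refine Finset.prod_congr rfl fun i _ => ?_
      rw [map_sub]
      congr 1
      · show e.symm (Polynomial.C (X k)) = X k.succ
        rw [← finSuccEquiv_X_succ (R := ℚ) (j := k), e.symm_apply_apply]
      · show e.symm (Polynomial.C (C (i:ℚ))) = C (i:ℚ)
        have := MvPolynomial.finSuccEquiv_comp_C_eq_C (R := ℚ) m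
        exact congrFun (congrArg (fun h => h.toFun) this) (i : ℚ)
    have hψmem : ∀ c ∈ Ideal.span (Set.range (fallGen m n)),
        ψ c ∈ Ideal.span (Set.range (fallGen (m+1) n)) := by
      intro c hc
      have h1 : ψ c ∈ Ideal.map ψ (Ideal.span (Set.range (fallGen m n))) :=
        Ideal.mem_map_of_mem ψ hc
      rw [Ideal.map_span] at h1
      refine Ideal.span_le.2 ?_ h1
      rintro _ ⟨_, ⟨k, rfl⟩, rfl⟩
      exact Ideal.subset_span ⟨k.succ, (hψgen k).symm⟩
    have hrsum : e.symm R = ∑ d ∈ Finset.range (R.natDegree + 1), ψ (R.coeff d) * (X 0) ^ d := by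
      conv_lhs => rw [Polynomial.as_sum_range' R (R.natDegree + 1) (Nat.lt_succ_self _)]
      rw [map_sum]
      refine Finset.sum_congr rfl fun d _ => ?_
      rw [← Polynomial.C_mul_X_pow_eq_monomial, map_mul, map_pow]
      congr 1
      rw [← finSuccEquiv_X_zero (R := ℚ) (n := m), e.symm_apply_apply]
    rw [hpdecomp]
    refine Ideal.add_mem _ ?_ (Ideal.mul_mem_right _ _ (Ideal.subset_span ⟨0, rfl⟩))
    rw [hrsum]
    exact Ideal.sum_mem _ fun d _ => Ideal.mul_mem_right _ _ (hψmem _ (hcmem d))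

lemma mem_vanish {n : ℕ} (p : MvPolynomial (Fin n) ℚ)
    (hp : p ∈ Ideal.span (Set.range (fallGen n n))) (a : Fin n → Fin n) :
    eval (fun j => ((a j : ℕ) : ℚ)) p = 0 := by
  refine Submodule.span_induction ?_ ?_ ?_ ?_ hp
  · rintro x ⟨k, rfl⟩; exact eval_fallGen_zero a k
  · simp
  · intro x y _ _ hx hy; rw [map_add, hx, hy, add_zero]
  · intro c x _ hx
    rw [smul_eq_mul, map_mul, hx, mul_zero]

lemma fallingIdeal_eq (n : ℕ) : fallingIdeal n = Ideal.span (Set.range (fallGen n n)) := rfl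

lemma abs_cast_sq {x y : ℤ} : |x| = |y| ↔ ((x:ℚ))^2 = ((y:ℚ))^2 := by
  rw [← sq_eq_sq_iff_abs_eq_abs]
  norm_cast

/-- The "good labeling" predicate corresponding to nonvanishing of both
Vandermonde polynomials. -/
def GoodLab (n : ℕ) (f : Fin n → Fin n) (a : Fin n → Fin n) : Prop :=
  Function.Injective a ∧ ∀ i j : Fin n, i < j →
    (((a (f j) : ℕ) : ℚ) - ((a j : ℕ) : ℚ))^2 ≠ (((a (f i) : ℕ) : ℚ) - ((a i : ℕ) : ℚ))^2

lemma comb (n : ℕ) (f : Fin n → Fin n) :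
    n = gapMax n f ↔ ∃ a : Fin n → Fin n, GoodLab n f a := by
  constructor
  · intro h
    obtain ⟨σ, -, hσ⟩ := Finset.exists_mem_eq_sup (Finset.univ : Finset (Equiv.Perm (Fin n)))
      Finset.univ_nonempty (fun σ : Equiv.Perm (Fin n) => (Finset.image
        (fun i : Fin n => |((σ (f (σ.symm i)) : ℕ) : ℤ) - ((i : ℕ) : ℤ)|) Finset.univ).card)
    rw [gapMax] at h
    rw [hσ] at h
    have hinj : Function.Injective
        (fun i : Fin n => |((σ (f (σ.symm i)) : ℕ) : ℤ) - ((i : ℕ) : ℤ)|) := by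
      have hcard : (Finset.image
          (fun i : Fin n => |((σ (f (σ.symm i)) : ℕ) : ℤ) - ((i : ℕ) : ℤ)|)
          Finset.univ).card = (Finset.univ : Finset (Fin n)).card := by
        rw [← h, Finset.card_univ, Fintype.card_fin]
      have := Finset.card_image_iff.mp hcard
      rw [Finset.coe_univ] at this
      exact fun x y hxy => this (Set.mem_univ x) (Set.mem_univ y) hxy
    refine ⟨fun v => σ v, σ.injective, ?_⟩
    intro u v huv hsq
    have h1 : |((σ (f v) : ℕ) : ℤ) - ((σ v : ℕ) : ℤ)| = |((σ (f u) : ℕ) : ℤ) - ((σ u : ℕ) : ℤ)| := by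
      rw [abs_cast_sq]; push_cast
      push_cast at hsq
      exact hsq
    have h2 := hinj (a₁ := σ v) (a₂ := σ u) (by simpa using h1)
    exact absurd (σ.injective h2) (ne_of_gt huv)
  · rintro ⟨a, ha, hgood⟩
    have hb : Function.Bijective a := (Finite.injective_iff_bijective).mp ha
    set σ := Equiv.ofBijective a hb with hσ
    have key : ∀ u v : Fin n, u < v →
        |((a (f v) : ℕ) : ℤ) - ((a v : ℕ) : ℤ)| ≠ |((a (f u) : ℕ) : ℤ) - ((a u : ℕ) : ℤ)| := by
      intro u v h hne
      apply hgood u v h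
      have h2 := abs_cast_sq.mp hne
      push_cast at h2 ⊢
      exact h2
    have habs : Function.Injective (fun v : Fin n => |((a (f v) : ℕ) : ℤ) - ((a v : ℕ) : ℤ)|) := by
      intro u v huv
      by_contra hne
      rcases lt_trichotomy u v with h | h | h
      · exact key u v h huv.symm
      · exact hne h
      · exact key v u h huv
    have hg : (fun i : Fin n => |((σ (f (σ.symm i)) : ℕ) : ℤ) - ((i : ℕ) : ℤ)|)
        = (fun v : Fin n => |((a (f v) : ℕ) : ℤ) - ((a v : ℕ) : ℤ)|) ∘ σ.symm := by
      funext i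
      simp only [Function.comp_apply]
      have h3 : i = a (σ.symm i) := (σ.apply_symm_apply i).symm
      rw [← h3]
      rfl
    have hle : gapMax n f ≤ n := by
      refine Finset.sup_le fun τ _ => ?_
      calc _ ≤ (Finset.univ : Finset (Fin n)).card := Finset.card_image_le
        _ = n := by simp
    refine le_antisymm ?_ hle
    rw [gapMax]
    have : n ≤ (Finset.image
        (fun i : Fin n => |((σ (f (σ.symm i)) : ℕ) : ℤ) - ((i : ℕ) : ℤ)|)
        Finset.univ).card := by
      rw [hg, Finset.card_image_of_injective _ (habs.comp σ.symm.injective)]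
      simp
    exact le_trans this (Finset.le_sup (f := fun τ : Equiv.Perm (Fin n) => (Finset.image
      (fun i : Fin n => |((τ (f (τ.symm i)) : ℕ) : ℤ) - ((i : ℕ) : ℤ)|) Finset.univ).card)
      (Finset.mem_univ σ))

lemma evalV_ne {n : ℕ} (a : Fin n → Fin n) :
    eval (fun j => ((a j : ℕ) : ℚ)) (vertexVandermonde n) ≠ 0 ↔ Function.Injective a := by
  rw [vertexVandermonde, map_prod, Finset.prod_ne_zero_iff]
  have hterm : ∀ p : Fin n × Fin n,
      (eval (fun j => ((a j : ℕ) : ℚ)) (X p.2 - X p.1) ≠ 0) ↔ a p.2 ≠ a p.1 := by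
    intro p
    rw [map_sub, eval_X, eval_X, sub_ne_zero, ne_eq, Nat.cast_inj, Fin.val_inj]
  constructor
  · intro h i j hij
    by_contra hne
    rcases lt_trichotomy i j with hlt | hlt | hlt
    · exact (hterm (i, j)).mp (h (i, j) (by simp [hlt])) hij.symm
    · exact hne hlt
    · exact (hterm (j, i)).mp (h (j, i) (by simp [hlt])) hij
  · intro h p hp
    refine (hterm p).mpr fun e => ?_
    exact absurd (h e) (ne_of_gt (Finset.mem_filter.mp hp).2)

lemma evalE_ne {n : ℕ} (f a : Fin n → Fin n) :
    eval (fun j => ((a j : ℕ) : ℚ)) (edgeVandermonde n f) ≠ 0 ↔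
      ∀ i j : Fin n, i < j →
        (((a (f j) : ℕ) : ℚ) - ((a j : ℕ) : ℚ))^2 ≠ (((a (f i) : ℕ) : ℚ) - ((a i : ℕ) : ℚ))^2 := by
  rw [edgeVandermonde, map_prod, Finset.prod_ne_zero_iff]
  constructor
  · intro h i j hij
    have := h (i, j) (by simp [hij])
    rwa [map_sub, map_pow, map_pow, map_sub, map_sub, eval_X, eval_X, eval_X, eval_X,
      sub_ne_zero] at this
  · intro h p hp
    rw [map_sub, map_pow, map_pow, map_sub, map_sub, eval_X, eval_X, eval_X, eval_X,
      sub_ne_zero]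
    exact h p.1 p.2 (Finset.mem_filter.mp hp).2

/-- Determinantal Certificate: `n = max_σ |{ |σ f σ⁻¹(i) − i| : i ∈ ℤ_n }|`
holds if and only if any least common multiple (in the UFD
`ℚ[x_0,…,x_{n−1}]`) of the vertex and edge Vandermonde polynomials does
not lie in the ideal generated by the falling factorials. -/
theorem determinantal_certificate (n : ℕ) (f : Fin n → Fin n)
    (L : MvPolynomial (Fin n) ℚ)
    (hdvd₁ : vertexVandermonde n ∣ L)
    (hdvd₂ : edgeVandermonde n f ∣ L)
    (hmin : ∀ M : MvPolynomial (Fin n) ℚ,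
      vertexVandermonde n ∣ M → edgeVandermonde n f ∣ M → L ∣ M) :
    n = gapMax n f ↔ L ∉ fallingIdeal n := by
  rw [comb n f, fallingIdeal_eq]
  constructor
  · rintro ⟨a, ha, hgood⟩ hL
    have h0 := mem_vanish L hL a
    have hdvd : L ∣ vertexVandermonde n * edgeVandermonde n f :=
      hmin _ ⟨_, rfl⟩ ⟨vertexVandermonde n, mul_comm _ _⟩
    obtain ⟨c, hc⟩ := hdvd
    have hz : eval (fun j => ((a j : ℕ) : ℚ)) (vertexVandermonde n * edgeVandermonde n f) = 0 := by
      rw [hc, map_mul, h0, zero_mul]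
    rw [map_mul, mul_eq_zero] at hz
    rcases hz with h | h
    · exact (evalV_ne a).mpr ha h
    · exact (evalE_ne f a).mpr hgood h
  · intro hL
    have hex : ¬ ∀ a : Fin n → Fin n, eval (fun j => ((a j : ℕ) : ℚ)) L = 0 :=
      fun h => hL (grid_vanish_mem n n le_rfl L h)
    push_neg at hex
    obtain ⟨a, ha⟩ := hex
    have hV : eval (fun j => ((a j : ℕ) : ℚ)) (vertexVandermonde n) ≠ 0 := by
      obtain ⟨c, rfl⟩ := hdvd₁
      intro h
      exact ha (by rw [map_mul, h, zero_mul])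
    have hE : eval (fun j => ((a j : ℕ) : ℚ)) (edgeVandermonde n f) ≠ 0 := by
      obtain ⟨c, rfl⟩ := hdvd₂
      intro h
      exact ha (by rw [map_mul, h, zero_mul])
    exact ⟨a, (evalV_ne a).mp hV, (evalE_ne f a).mp hE⟩
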